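/- Consider the six four-qubit sequence states |ψ_{ij}⟩ = |ψ_i⟩⊗|ψ_j⟩ (i ≠ j) built from S_U = {|ψ₁⟩=|00⟩, |ψ₂⟩=|0+⟩, |ψ₃⟩=|+0⟩}. The three subsets S₁ = {ψ₁₂, ψ₁₃, ψ₂₁}, S₂ = {ψ₁₂, ψ₂₃, ψ₃₁}, S₃ = {ψ₁₃, ψ₂₁, ψ₃₂} each consist of three pure states satisfying the Caves–Fuchs–Schack antidistinguishability conditions, and S₁ ∪ S₂ ∪ S₃ equals the full set of six sequence states; hence (by the union theorem) the set of six sequence states is globally antidistinguishable. -/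

import Mathlib

open Matrix Complex
open scoped ComplexOrder

noncomputable section

/-- Outer product `|v⟩⟨v|`. -/
def outer {n : Type*} [Fintype n] (v : n → ℂ) : Matrix n n ℂ := vecMulVec v (star v)

/-- Expectation value `⟨v|M|v⟩`. -/
def expVal {n : Type*} [Fintype n] (M : Matrix n n ℂ) (v : n → ℂ) : ℂ := star v ⬝ᵥ (M *ᵥ v)

/-- Inner product `⟨v|w⟩`. -/
def ip {n : Type*} [Fintype n] (v w : n → ℂ) : ℂ := ∑ i, star (v i) * w i

def PureAntidist {n : ℕ} {ι : Type*} [Fintype ι] [DecidableEq ι] (φ : Fin n → (ι → ℂ)) : Prop :=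
  ∃ P : Fin n → Matrix ι ι ℂ,
    (∀ j, (P j).PosSemidef) ∧
    (∑ j, P j) = 1 ∧
    (∀ j, expVal (P j) (φ j) = 0) ∧
    (∀ j, 0 < (∑ i, expVal (P j) (φ i)).re)

/-- The Caves–Fuchs–Schack antidistinguishability conditions for three pure states. -/
def CFS {ι : Type*} [Fintype ι] (a b c : ι → ℂ) : Prop :=
  Complex.normSq (ip a b) + Complex.normSq (ip a c) + Complex.normSq (ip b c) < 1 ∧
  (1 - (Complex.normSq (ip a b) + Complex.normSq (ip a c) + Complex.normSq (ip b c))) ^ 2 ≥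
    4 * Complex.normSq (ip a b) * Complex.normSq (ip a c) * Complex.normSq (ip b c)

def tp (v w : Fin 2 → ℂ) : Fin 2 × Fin 2 → ℂ := fun p => v p.1 * w p.2

def tp4 (v w : Fin 2 × Fin 2 → ℂ) : (Fin 2 × Fin 2) × (Fin 2 × Fin 2) → ℂ :=
  fun p => v p.1 * w p.2

def q0 : Fin 2 → ℂ := ![1, 0]
def qp : Fin 2 → ℂ := ![(1 / Real.sqrt 2 : ℝ), (1 / Real.sqrt 2 : ℝ)]

/-- The parent states `|ψ₁⟩ = |00⟩, |ψ₂⟩ = |0+⟩, |ψ₃⟩ = |+0⟩`. -/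
def par : Fin 3 → (Fin 2 × Fin 2 → ℂ) := ![tp q0 q0, tp q0 qp, tp qp q0]

/-- The six sequence states `|ψ_{ij}⟩ = |ψ_i⟩⊗|ψ_j⟩`, `i ≠ j`, in the order
`ψ₁₂, ψ₁₃, ψ₂₁, ψ₂₃, ψ₃₁, ψ₃₂`. -/
def seq6 : Fin 6 → ((Fin 2 × Fin 2) × (Fin 2 × Fin 2) → ℂ) :=
  ![tp4 (par 0) (par 1), tp4 (par 0) (par 2), tp4 (par 1) (par 0),
    tp4 (par 1) (par 2), tp4 (par 2) (par 0), tp4 (par 2) (par 1)]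

/-! ### Auxiliary constructions for the antidistinguishing POVM -/

abbrev Idx := (Fin 2 × Fin 2) × (Fin 2 × Fin 2)

def iv (m : Fin 2 → Fin 2 → Fin 2 → Fin 2 → ℤ) : Idx → ℤ := fun p => m p.1.1 p.1.2 p.2.1 p.2.2
def bv (q : Idx) : Idx → ℤ := fun p => if p = q then 1 else 0
def vmv (v : Idx → ℤ) : Matrix Idx Idx ℤ := Matrix.vecMulVec v v
def cz (v : Idx → ℤ) : Idx → ℂ := fun p => (v p : ℂ)
def pcm (m : ℤ) (v : Idx → ℤ) : Matrix Idx Idx ℂ := (((m : ℝ)/1800 : ℝ) : ℂ) • outer (cz v)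
def mapZ (M : Matrix Idx Idx ℤ) : Matrix Idx Idx ℂ := M.map fun z => (z : ℂ)

def phiA : Idx → ℤ := iv ![![![![1, -1], ![1, 0]], ![![1, 0], ![0, 0]]], ![![![0, 0], ![0, 0]], ![![0, 0], ![0, 0]]]]
def phiB : Idx → ℤ := iv ![![![![1, 1], ![-1, 0]], ![![1, 0], ![0, 0]]], ![![![0, 0], ![0, 0]], ![![0, 0], ![0, 0]]]]
def phiC : Idx → ℤ := iv ![![![![1, 1], ![1, 0]], ![![-1, 0], ![0, 0]]], ![![![0, 0], ![0, 0]], ![![0, 0], ![0, 0]]]]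
def u1 : Idx → ℤ := iv ![![![![1, -1], ![-1, 0]], ![![-1, 0], ![0, 0]]], ![![![0, 0], ![0, 0]], ![![0, 0], ![0, 0]]]]
def v1 : Idx → ℤ := iv ![![![![1, -1], ![1, 0]], ![![1, 0], ![1, 0]]], ![![![1, 0], ![0, 0]], ![![0, 0], ![0, 0]]]]
def v2 : Idx → ℤ := iv ![![![![3, 2], ![-1, 0]], ![![-1, 0], ![-1, 0]]], ![![![2, 0], ![0, 0]], ![![0, 0], ![0, 0]]]]
def v3 : Idx → ℤ := iv ![![![![3, -3], ![-1, 0]], ![![-1, 0], ![-1, 0]]], ![![![7, 0], ![0, 0]], ![![0, 0], ![0, 0]]]]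
def v4 : Idx → ℤ := iv ![![![![2, 3], ![1, 0]], ![![1, 0], ![1, 0]]], ![![![-2, 0], ![0, 0]], ![![0, 0], ![0, 0]]]]
def v5 : Idx → ℤ := iv ![![![![1, -1], ![3, 0]], ![![3, 0], ![3, 0]]], ![![![-1, 0], ![0, 0]], ![![0, 0], ![0, 0]]]]
def w1 : Idx → ℤ := iv ![![![![0, 0], ![1, 0]], ![![-1, 0], ![0, 0]]], ![![![0, 0], ![0, 0]], ![![0, 0], ![0, 0]]]]
def w2 : Idx → ℤ := iv ![![![![0, 0], ![1, 0]], ![![1, 0], ![-2, 0]]], ![![![0, 0], ![0, 0]], ![![0, 0], ![0, 0]]]]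
def w3 : Idx → ℤ := iv ![![![![3, -3], ![-1, 0]], ![![-1, 0], ![-1, 0]]], ![![![-3, 0], ![0, 0]], ![![0, 0], ![0, 0]]]]
def mv1 : Idx → ℤ := iv ![![![![1, 1], ![-1, 0]], ![![1, 0], ![0, 0]]], ![![![1, 1], ![0, 0]], ![![0, 0], ![0, 0]]]]
def mv2 : Idx → ℤ := iv ![![![![3, -1], ![2, 0]], ![![2, 0], ![0, 0]]], ![![![-1, -1], ![0, 0]], ![![0, 0], ![0, 0]]]]
def mv3 : Idx → ℤ := iv ![![![![3, -1], ![-3, 0]], ![![7, 0], ![0, 0]]], ![![![-1, -1], ![0, 0]], ![![0, 0], ![0, 0]]]]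
def mv4 : Idx → ℤ := iv ![![![![2, 1], ![3, 0]], ![![-2, 0], ![0, 0]]], ![![![1, 1], ![0, 0]], ![![0, 0], ![0, 0]]]]
def mv5 : Idx → ℤ := iv ![![![![1, 3], ![-1, 0]], ![![-1, 0], ![0, 0]]], ![![![3, 3], ![0, 0]], ![![0, 0], ![0, 0]]]]
def mw1 : Idx → ℤ := iv ![![![![0, 1], ![0, 0]], ![![0, 0], ![0, 0]]], ![![![-1, 0], ![0, 0]], ![![0, 0], ![0, 0]]]]
def mw2 : Idx → ℤ := iv ![![![![0, 1], ![0, 0]], ![![0, 0], ![0, 0]]], ![![![1, -2], ![0, 0]], ![![0, 0], ![0, 0]]]]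
def mw3 : Idx → ℤ := iv ![![![![3, -1], ![-3, 0]], ![![-3, 0], ![0, 0]]], ![![![-1, -1], ![0, 0]], ![![0, 0], ![0, 0]]]]


def N0 : Matrix Idx Idx ℤ := (150 : ℤ) • vmv (phiA) + (600 : ℤ) • vmv (bv (((0,0),(1,1)) : Idx)) + (600 : ℤ) • vmv (bv (((0,1),(0,1)) : Idx)) + (600 : ℤ) • vmv (bv (((0,1),(1,0)) : Idx)) + (600 : ℤ) • vmv (bv (((0,1),(1,1)) : Idx)) + (600 : ℤ) • vmv (bv (((1,0),(0,0)) : Idx)) + (600 : ℤ) • vmv (bv (((1,0),(0,1)) : Idx)) + (600 : ℤ) • vmv (bv (((1,0),(1,0)) : Idx)) + (600 : ℤ) • vmv (bv (((1,0),(1,1)) : Idx)) + (600 : ℤ) • vmv (bv (((1,1),(0,0)) : Idx)) + (600 : ℤ) • vmv (bv (((1,1),(0,1)) : Idx)) + (600 : ℤ) • vmv (bv (((1,1),(1,0)) : Idx)) + (600 : ℤ) • vmv (bv (((1,1),(1,1)) : Idx)) + (150 : ℤ) • vmv (u1) + (75 : ℤ) • vmv (v1)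
def N1 : Matrix Idx Idx ℤ := (150 : ℤ) • vmv (phiB) + (75 : ℤ) • vmv (mv1)
def N2 : Matrix Idx Idx ℤ := (150 : ℤ) • vmv (phiC) + (24 : ℤ) • vmv (mv4) + (6 : ℤ) • vmv (mv5)
def N3 : Matrix Idx Idx ℤ := (24 : ℤ) • vmv (v2) + (3 : ℤ) • vmv (v3) + (600 : ℤ) • vmv (bv (((0,0),(1,1)) : Idx)) + (600 : ℤ) • vmv (bv (((0,1),(0,1)) : Idx)) + (600 : ℤ) • vmv (bv (((0,1),(1,1)) : Idx)) + (600 : ℤ) • vmv (bv (((1,0),(0,1)) : Idx)) + (600 : ℤ) • vmv (bv (((1,0),(1,0)) : Idx)) + (600 : ℤ) • vmv (bv (((1,0),(1,1)) : Idx)) + (600 : ℤ) • vmv (bv (((1,1),(0,0)) : Idx)) + (600 : ℤ) • vmv (bv (((1,1),(0,1)) : Idx)) + (600 : ℤ) • vmv (bv (((1,1),(1,0)) : Idx)) + (600 : ℤ) • vmv (bv (((1,1),(1,1)) : Idx)) + (300 : ℤ) • vmv (w1) + (100 : ℤ) • vmv (w2) + (20 : ℤ) • vmv (w3)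
def N4 : Matrix Idx Idx ℤ := (24 : ℤ) • vmv (v4) + (6 : ℤ) • vmv (v5)
def N5 : Matrix Idx Idx ℤ := (24 : ℤ) • vmv (mv2) + (3 : ℤ) • vmv (mv3) + (600 : ℤ) • vmv (bv (((0,0),(1,1)) : Idx)) + (600 : ℤ) • vmv (bv (((0,1),(0,1)) : Idx)) + (600 : ℤ) • vmv (bv (((0,1),(1,0)) : Idx)) + (600 : ℤ) • vmv (bv (((0,1),(1,1)) : Idx)) + (600 : ℤ) • vmv (bv (((1,0),(1,0)) : Idx)) + (600 : ℤ) • vmv (bv (((1,0),(1,1)) : Idx)) + (600 : ℤ) • vmv (bv (((1,1),(0,0)) : Idx)) + (600 : ℤ) • vmv (bv (((1,1),(0,1)) : Idx)) + (600 : ℤ) • vmv (bv (((1,1),(1,0)) : Idx)) + (600 : ℤ) • vmv (bv (((1,1),(1,1)) : Idx)) + (300 : ℤ) • vmv (mw1) + (100 : ℤ) • vmv (mw2) + (20 : ℤ) • vmv (mw3)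


def P0 : Matrix Idx Idx ℂ := pcm 150 (phiA) + pcm 600 (bv (((0,0),(1,1)) : Idx)) + pcm 600 (bv (((0,1),(0,1)) : Idx)) + pcm 600 (bv (((0,1),(1,0)) : Idx)) + pcm 600 (bv (((0,1),(1,1)) : Idx)) + pcm 600 (bv (((1,0),(0,0)) : Idx)) + pcm 600 (bv (((1,0),(0,1)) : Idx)) + pcm 600 (bv (((1,0),(1,0)) : Idx)) + pcm 600 (bv (((1,0),(1,1)) : Idx)) + pcm 600 (bv (((1,1),(0,0)) : Idx)) + pcm 600 (bv (((1,1),(0,1)) : Idx)) + pcm 600 (bv (((1,1),(1,0)) : Idx)) + pcm 600 (bv (((1,1),(1,1)) : Idx)) + pcm 150 (u1) + pcm 75 (v1)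
def P1 : Matrix Idx Idx ℂ := pcm 150 (phiB) + pcm 75 (mv1)
def P2 : Matrix Idx Idx ℂ := pcm 150 (phiC) + pcm 24 (mv4) + pcm 6 (mv5)
def P3 : Matrix Idx Idx ℂ := pcm 24 (v2) + pcm 3 (v3) + pcm 600 (bv (((0,0),(1,1)) : Idx)) + pcm 600 (bv (((0,1),(0,1)) : Idx)) + pcm 600 (bv (((0,1),(1,1)) : Idx)) + pcm 600 (bv (((1,0),(0,1)) : Idx)) + pcm 600 (bv (((1,0),(1,0)) : Idx)) + pcm 600 (bv (((1,0),(1,1)) : Idx)) + pcm 600 (bv (((1,1),(0,0)) : Idx)) + pcm 600 (bv (((1,1),(0,1)) : Idx)) + pcm 600 (bv (((1,1),(1,0)) : Idx)) + pcm 600 (bv (((1,1),(1,1)) : Idx)) + pcm 300 (w1) + pcm 100 (w2) + pcm 20 (w3)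
def P4 : Matrix Idx Idx ℂ := pcm 24 (v4) + pcm 6 (v5)
def P5 : Matrix Idx Idx ℂ := pcm 24 (mv2) + pcm 3 (mv3) + pcm 600 (bv (((0,0),(1,1)) : Idx)) + pcm 600 (bv (((0,1),(0,1)) : Idx)) + pcm 600 (bv (((0,1),(1,0)) : Idx)) + pcm 600 (bv (((0,1),(1,1)) : Idx)) + pcm 600 (bv (((1,0),(1,0)) : Idx)) + pcm 600 (bv (((1,0),(1,1)) : Idx)) + pcm 600 (bv (((1,1),(0,0)) : Idx)) + pcm 600 (bv (((1,1),(0,1)) : Idx)) + pcm 600 (bv (((1,1),(1,0)) : Idx)) + pcm 600 (bv (((1,1),(1,1)) : Idx)) + pcm 300 (mw1) + pcm 100 (mw2) + pcm 20 (mw3)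


lemma mapZ_add (A B : Matrix Idx Idx ℤ) : mapZ (A + B) = mapZ A + mapZ B := by
  ext i j; simp [mapZ]

lemma pcm_map (m : ℤ) (v : Idx → ℤ) :
    pcm m v = ((1/1800 : ℝ) : ℂ) • mapZ (m • vmv v) := by
  ext i j
  simp only [pcm, mapZ, vmv, outer, cz, Matrix.map_apply, Matrix.smul_apply,
    Matrix.vecMulVec_apply, star_intCast, smul_eq_mul, Int.cast_mul, Pi.star_apply]
  push_cast
  ring

lemma expVal_add' (A B : Matrix Idx Idx ℂ) (x : Idx → ℂ) :
    expVal (A + B) x = expVal A x + expVal B x := by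
  simp [expVal, Matrix.add_mulVec, dotProduct_add]

lemma expVal_outer (v w : Idx → ℂ) : expVal (outer v) w = star (ip v w) * ip v w := by
  have h1 : star (ip v w) = ∑ i, v i * star (w i) := by
    simp [ip, star_sum, mul_comm]
  rw [h1, ip, Finset.sum_mul_sum]
  simp only [expVal, outer, Matrix.vecMulVec_apply, Matrix.mulVec, dotProduct, Finset.mul_sum]
  refine Finset.sum_congr rfl fun i _ => Finset.sum_congr rfl fun j _ => by simp only [Pi.star_apply]; ring

lemma expVal_pcm (m : ℤ) (v : Idx → ℤ) (x : Idx → ℂ) :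
    expVal (pcm m v) x
      = (((m : ℝ)/1800 : ℝ) : ℂ) * (star (ip (cz v) x) * ip (cz v) x) := by
  simp only [pcm, expVal, Matrix.smul_mulVec, dotProduct_smul, smul_eq_mul]
  rw [← expVal_outer]; rfl

lemma pcm_psd (m : ℤ) (hm : 0 ≤ m) (v : Idx → ℤ) : (pcm m v).PosSemidef := by
  rw [Matrix.posSemidef_iff_dotProduct_mulVec]
  constructor
  · ext i j
    simp [pcm, outer, cz, Matrix.vecMulVec_apply, Matrix.conjTranspose_apply,
      Matrix.smul_apply, star_mul', star_intCast, Complex.conj_ofReal]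
    try ring
    try tauto
  · intro x
    show (0 : ℂ) ≤ expVal (pcm m v) x
    rw [expVal_pcm]
    refine mul_nonneg ?_ (star_mul_self_nonneg _)
    rw [Complex.zero_le_real]
    positivity

set_option maxRecDepth 10000 in
lemma Ntot : N0 + N1 + N2 + N3 + N4 + N5 = (1800 : ℤ) • (1 : Matrix Idx Idx ℤ) := by decide

def Pm : Fin 6 → Matrix Idx Idx ℂ :=
  fun j => match j with
  | 0 => P0 | 1 => P1 | 2 => P2 | 3 => P3 | 4 => P4 | 5 => P5

def Nm : Fin 6 → Matrix Idx Idx ℤ :=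
  fun j => match j with
  | 0 => N0 | 1 => N1 | 2 => N2 | 3 => N3 | 4 => N4 | 5 => N5

lemma P0_eq : P0 = ((1/1800 : ℝ) : ℂ) • mapZ N0 := by
  simp only [P0, N0, pcm_map, ← smul_add, ← mapZ_add]
lemma P1_eq : P1 = ((1/1800 : ℝ) : ℂ) • mapZ N1 := by
  simp only [P1, N1, pcm_map, ← smul_add, ← mapZ_add]
lemma P2_eq : P2 = ((1/1800 : ℝ) : ℂ) • mapZ N2 := by
  simp only [P2, N2, pcm_map, ← smul_add, ← mapZ_add]
lemma P3_eq : P3 = ((1/1800 : ℝ) : ℂ) • mapZ N3 := by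
  simp only [P3, N3, pcm_map, ← smul_add, ← mapZ_add]
lemma P4_eq : P4 = ((1/1800 : ℝ) : ℂ) • mapZ N4 := by
  simp only [P4, N4, pcm_map, ← smul_add, ← mapZ_add]
lemma P5_eq : P5 = ((1/1800 : ℝ) : ℂ) • mapZ N5 := by
  simp only [P5, N5, pcm_map, ← smul_add, ← mapZ_add]

lemma Psum : (∑ j, Pm j) = 1 := by
  rw [Fin.sum_univ_six]
  show P0 + P1 + P2 + P3 + P4 + P5 = 1
  rw [P0_eq, P1_eq, P2_eq, P3_eq, P4_eq, P5_eq,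
    ← smul_add, ← smul_add, ← smul_add, ← smul_add, ← smul_add,
    ← mapZ_add, ← mapZ_add, ← mapZ_add, ← mapZ_add, ← mapZ_add, Ntot]
  ext i j
  simp only [mapZ, Matrix.map_apply, Matrix.smul_apply, smul_eq_mul, Matrix.one_apply]
  by_cases h : i = j <;> simp [h] <;> norm_num

/-! ### sqrt 2 facts -/

lemma rs2 : Real.sqrt 2 ^ 2 = 2 := Real.sq_sqrt (by norm_num)

lemma c2 : ((Real.sqrt 2 : ℝ) : ℂ) ^ 2 = 2 := by
  norm_num [← Complex.ofReal_pow, rs2]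

lemma cne : ((Real.sqrt 2 : ℝ) : ℂ) ≠ 0 := by
  simp [Real.sqrt_ne_zero']

lemma cinv : ((Real.sqrt 2 : ℝ) : ℂ)⁻¹ = ((Real.sqrt 2 : ℝ) : ℂ) / 2 := by
  field_simp
  linear_combination -c2

lemma c3 : ((Real.sqrt 2 : ℝ) : ℂ) ^ 3 = 2 * ((Real.sqrt 2 : ℝ) : ℂ) := by
  linear_combination ((Real.sqrt 2 : ℝ) : ℂ) * c2

lemma c4 : ((Real.sqrt 2 : ℝ) : ℂ) ^ 4 = 4 := by
  linear_combination (((Real.sqrt 2 : ℝ) : ℂ) ^ 2 + 2) * c2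

lemma s0' : seq6 0 = tp4 (par 0) (par 1) := rfl
lemma s1' : seq6 1 = tp4 (par 0) (par 2) := rfl
lemma s2' : seq6 2 = tp4 (par 1) (par 0) := rfl
lemma s3' : seq6 3 = tp4 (par 1) (par 2) := rfl
lemma s4' : seq6 4 = tp4 (par 2) (par 0) := rfl
lemma s5' : seq6 5 = tp4 (par 2) (par 1) := rfl
lemma p0' : par 0 = tp q0 q0 := rfl
lemma p1' : par 1 = tp q0 qp := rfl
lemma p2' : par 2 = tp qp q0 := rfl

lemma ip01 : ip (seq6 0) (seq6 1) = ((1/2 : ℝ) : ℂ) := by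
  simp [ip, s0', s1', s2', s3', s4', s5', p0', p1', p2', tp4, tp, q0, qp,
    Fintype.sum_prod_type, Fin.sum_univ_two, one_div]
  push_cast
  simp only [cinv]
  ring_nf
  norm_num [c2, c3, c4]
  try ring

lemma ip02 : ip (seq6 0) (seq6 2) = ((1/2 : ℝ) : ℂ) := by
  simp [ip, s0', s1', s2', s3', s4', s5', p0', p1', p2', tp4, tp, q0, qp,
    Fintype.sum_prod_type, Fin.sum_univ_two, one_div]
  push_cast
  simp only [cinv]
  ring_nf
  norm_num [c2, c3, c4]
  try ring

lemma ip12 : ip (seq6 1) (seq6 2) = ((1/2 : ℝ) : ℂ) := by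
  simp [ip, s0', s1', s2', s3', s4', s5', p0', p1', p2', tp4, tp, q0, qp,
    Fintype.sum_prod_type, Fin.sum_univ_two, one_div]
  push_cast
  simp only [cinv]
  ring_nf
  norm_num [c2, c3, c4]
  try ring

lemma ip03 : ip (seq6 0) (seq6 3) = ((Real.sqrt 2 / 4 : ℝ) : ℂ) := by
  simp [ip, s0', s1', s2', s3', s4', s5', p0', p1', p2', tp4, tp, q0, qp,
    Fintype.sum_prod_type, Fin.sum_univ_two, one_div]
  push_cast
  simp only [cinv]
  ring_nf
  norm_num [c2, c3, c4]
  try ring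

lemma ip04 : ip (seq6 0) (seq6 4) = ((1/2 : ℝ) : ℂ) := by
  simp [ip, s0', s1', s2', s3', s4', s5', p0', p1', p2', tp4, tp, q0, qp,
    Fintype.sum_prod_type, Fin.sum_univ_two, one_div]
  push_cast
  simp only [cinv]
  ring_nf
  norm_num [c2, c3, c4]
  try ring

lemma ip34 : ip (seq6 3) (seq6 4) = ((Real.sqrt 2 / 4 : ℝ) : ℂ) := by
  simp [ip, s0', s1', s2', s3', s4', s5', p0', p1', p2', tp4, tp, q0, qp,
    Fintype.sum_prod_type, Fin.sum_univ_two, one_div]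
  push_cast
  simp only [cinv]
  ring_nf
  norm_num [c2, c3, c4]
  try ring

lemma ip15 : ip (seq6 1) (seq6 5) = ((Real.sqrt 2 / 4 : ℝ) : ℂ) := by
  simp [ip, s0', s1', s2', s3', s4', s5', p0', p1', p2', tp4, tp, q0, qp,
    Fintype.sum_prod_type, Fin.sum_univ_two, one_div]
  push_cast
  simp only [cinv]
  ring_nf
  norm_num [c2, c3, c4]
  try ring

lemma ip25 : ip (seq6 2) (seq6 5) = ((Real.sqrt 2 / 4 : ℝ) : ℂ) := by
  simp [ip, s0', s1', s2', s3', s4', s5', p0', p1', p2', tp4, tp, q0, qp,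
    Fintype.sum_prod_type, Fin.sum_univ_two, one_div]
  push_cast
  simp only [cinv]
  ring_nf
  norm_num [c2, c3, c4]
  try ring

lemma nshalf : Complex.normSq ((1/2 : ℝ) : ℂ) = 1/4 := by
  rw [Complex.normSq_ofReal]; norm_num

lemma nss24 : Complex.normSq ((Real.sqrt 2 / 4 : ℝ) : ℂ) = 1/8 := by
  rw [Complex.normSq_ofReal, div_mul_div_comm, Real.mul_self_sqrt] <;> norm_num

lemma cfs1 : CFS (seq6 0) (seq6 1) (seq6 2) := by
  unfold CFS
  rw [ip01, ip02, ip12, nshalf]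
  norm_num

lemma cfs2 : CFS (seq6 0) (seq6 3) (seq6 4) := by
  unfold CFS
  rw [ip03, ip04, ip34, nshalf, nss24]
  norm_num

lemma cfs3 : CFS (seq6 1) (seq6 2) (seq6 5) := by
  unfold CFS
  rw [ip12, ip15, ip25, nshalf, nss24]
  norm_num

lemma union_eq :
    ({seq6 0, seq6 1, seq6 2} ∪ {seq6 0, seq6 3, seq6 4} ∪ {seq6 1, seq6 2, seq6 5} :
        Set ((Fin 2 × Fin 2) × (Fin 2 × Fin 2) → ℂ)) =
      {seq6 0, seq6 1, seq6 2, seq6 3, seq6 4, seq6 5} := by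
  ext x
  simp only [Set.mem_union, Set.mem_insert_iff, Set.mem_singleton_iff]
  tauto

lemma re_nonneg (M : Matrix Idx Idx ℂ) (h : M.PosSemidef) (x : Idx → ℂ) :
    0 ≤ (expVal M x).re :=
  (Complex.nonneg_iff.mp (h.dotProduct_mulVec_nonneg x)).1

lemma psd0 : (Pm 0).PosSemidef := by
  show P0.PosSemidef
  unfold P0
  repeat' (first | exact pcm_psd _ (by norm_num) _ | apply Matrix.PosSemidef.add)

lemma zero0 : expVal (Pm 0) (seq6 0) = 0 := by
  show expVal P0 (seq6 0) = 0
  simp only [P0, expVal_add', expVal_pcm]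
  simp [ip, cz, iv, bv, phiA, phiB, phiC, u1, v1, v2, v3, v4, v5, w1, w2, w3,
      mv1, mv2, mv3, mv4, mv5, mw1, mw2, mw3, s0', s1', s2', s3', s4', s5', p0', p1', p2',
      tp4, tp, q0, qp, Fintype.sum_prod_type, Fin.sum_univ_two, one_div, Prod.mk.injEq,
      Complex.star_def, _root_.map_add, _root_.map_mul, Complex.conj_ofReal]
  try push_cast
  try simp only [cinv]
  try ring_nf
  try norm_num [c2, c3, c4]

lemma wit0 : expVal (Pm 0) (seq6 1) = ((1/4 : ℝ) : ℂ) := by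
  show expVal P0 (seq6 1) = ((1/4 : ℝ) : ℂ)
  simp only [P0, expVal_add', expVal_pcm]
  simp [ip, cz, iv, bv, phiA, phiB, phiC, u1, v1, v2, v3, v4, v5, w1, w2, w3,
      mv1, mv2, mv3, mv4, mv5, mw1, mw2, mw3, s0', s1', s2', s3', s4', s5', p0', p1', p2',
      tp4, tp, q0, qp, Fintype.sum_prod_type, Fin.sum_univ_two, one_div, Prod.mk.injEq,
      Complex.star_def, _root_.map_add, _root_.map_mul, Complex.conj_ofReal]
  try push_cast
  try simp only [cinv]
  try ring_nf
  try norm_num [c2, c3, c4]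
  try ring

lemma pos0 : 0 < (∑ i, expVal (Pm 0) (seq6 i)).re := by
  have hnn : ∀ i : Fin 6, 0 ≤ (expVal (Pm 0) (seq6 i)).re := fun i => re_nonneg _ psd0 _
  rw [Fin.sum_univ_six]
  simp only [Complex.add_re]
  have h0 := hnn 0; have h1 := hnn 1; have h2 := hnn 2
  have h3 := hnn 3; have h4 := hnn 4; have h5 := hnn 5
  have hw := wit0
  rw [hw] at *
  simp only [Complex.ofReal_re] at *
  linarith

lemma psd1 : (Pm 1).PosSemidef := by
  show P1.PosSemidef
  unfold P1
  repeat' (first | exact pcm_psd _ (by norm_num) _ | apply Matrix.PosSemidef.add)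

lemma zero1 : expVal (Pm 1) (seq6 1) = 0 := by
  show expVal P1 (seq6 1) = 0
  simp only [P1, expVal_add', expVal_pcm]
  simp [ip, cz, iv, bv, phiA, phiB, phiC, u1, v1, v2, v3, v4, v5, w1, w2, w3,
      mv1, mv2, mv3, mv4, mv5, mw1, mw2, mw3, s0', s1', s2', s3', s4', s5', p0', p1', p2',
      tp4, tp, q0, qp, Fintype.sum_prod_type, Fin.sum_univ_two, one_div, Prod.mk.injEq,
      Complex.star_def, _root_.map_add, _root_.map_mul, Complex.conj_ofReal]
  try push_cast
  try simp only [cinv]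
  try ring_nf
  try norm_num [c2, c3, c4]

lemma wit1 : expVal (Pm 1) (seq6 0) = ((1/4 : ℝ) : ℂ) := by
  show expVal P1 (seq6 0) = ((1/4 : ℝ) : ℂ)
  simp only [P1, expVal_add', expVal_pcm]
  simp [ip, cz, iv, bv, phiA, phiB, phiC, u1, v1, v2, v3, v4, v5, w1, w2, w3,
      mv1, mv2, mv3, mv4, mv5, mw1, mw2, mw3, s0', s1', s2', s3', s4', s5', p0', p1', p2',
      tp4, tp, q0, qp, Fintype.sum_prod_type, Fin.sum_univ_two, one_div, Prod.mk.injEq,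
      Complex.star_def, _root_.map_add, _root_.map_mul, Complex.conj_ofReal]
  try push_cast
  try simp only [cinv]
  try ring_nf
  try norm_num [c2, c3, c4]
  try ring

lemma pos1 : 0 < (∑ i, expVal (Pm 1) (seq6 i)).re := by
  have hnn : ∀ i : Fin 6, 0 ≤ (expVal (Pm 1) (seq6 i)).re := fun i => re_nonneg _ psd1 _
  rw [Fin.sum_univ_six]
  simp only [Complex.add_re]
  have h0 := hnn 0; have h1 := hnn 1; have h2 := hnn 2
  have h3 := hnn 3; have h4 := hnn 4; have h5 := hnn 5
  have hw := wit1
  rw [hw] at *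
  simp only [Complex.ofReal_re] at *
  linarith

lemma psd2 : (Pm 2).PosSemidef := by
  show P2.PosSemidef
  unfold P2
  repeat' (first | exact pcm_psd _ (by norm_num) _ | apply Matrix.PosSemidef.add)

lemma zero2 : expVal (Pm 2) (seq6 2) = 0 := by
  show expVal P2 (seq6 2) = 0
  simp only [P2, expVal_add', expVal_pcm]
  simp [ip, cz, iv, bv, phiA, phiB, phiC, u1, v1, v2, v3, v4, v5, w1, w2, w3,
      mv1, mv2, mv3, mv4, mv5, mw1, mw2, mw3, s0', s1', s2', s3', s4', s5', p0', p1', p2',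
      tp4, tp, q0, qp, Fintype.sum_prod_type, Fin.sum_univ_two, one_div, Prod.mk.injEq,
      Complex.star_def, _root_.map_add, _root_.map_mul, Complex.conj_ofReal]
  try push_cast
  try simp only [cinv]
  try ring_nf
  try norm_num [c2, c3, c4]

lemma wit2 : expVal (Pm 2) (seq6 0) = ((19/75 : ℝ) : ℂ) := by
  show expVal P2 (seq6 0) = ((19/75 : ℝ) : ℂ)
  simp only [P2, expVal_add', expVal_pcm]
  simp [ip, cz, iv, bv, phiA, phiB, phiC, u1, v1, v2, v3, v4, v5, w1, w2, w3,
      mv1, mv2, mv3, mv4, mv5, mw1, mw2, mw3, s0', s1', s2', s3', s4', s5', p0', p1', p2',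
      tp4, tp, q0, qp, Fintype.sum_prod_type, Fin.sum_univ_two, one_div, Prod.mk.injEq,
      Complex.star_def, _root_.map_add, _root_.map_mul, Complex.conj_ofReal]
  try push_cast
  try simp only [cinv]
  try ring_nf
  try norm_num [c2, c3, c4]
  try ring

lemma pos2 : 0 < (∑ i, expVal (Pm 2) (seq6 i)).re := by
  have hnn : ∀ i : Fin 6, 0 ≤ (expVal (Pm 2) (seq6 i)).re := fun i => re_nonneg _ psd2 _
  rw [Fin.sum_univ_six]
  simp only [Complex.add_re]
  have h0 := hnn 0; have h1 := hnn 1; have h2 := hnn 2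
  have h3 := hnn 3; have h4 := hnn 4; have h5 := hnn 5
  have hw := wit2
  rw [hw] at *
  simp only [Complex.ofReal_re] at *
  linarith

lemma psd3 : (Pm 3).PosSemidef := by
  show P3.PosSemidef
  unfold P3
  repeat' (first | exact pcm_psd _ (by norm_num) _ | apply Matrix.PosSemidef.add)

lemma zero3 : expVal (Pm 3) (seq6 3) = 0 := by
  show expVal P3 (seq6 3) = 0
  simp only [P3, expVal_add', expVal_pcm]
  simp [ip, cz, iv, bv, phiA, phiB, phiC, u1, v1, v2, v3, v4, v5, w1, w2, w3,
      mv1, mv2, mv3, mv4, mv5, mw1, mw2, mw3, s0', s1', s2', s3', s4', s5', p0', p1', p2',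
      tp4, tp, q0, qp, Fintype.sum_prod_type, Fin.sum_univ_two, one_div, Prod.mk.injEq,
      Complex.star_def, _root_.map_add, _root_.map_mul, Complex.conj_ofReal]
  try push_cast
  try simp only [cinv]
  try ring_nf
  try norm_num [c2, c3, c4]

lemma wit3 : expVal (Pm 3) (seq6 0) = ((1/6 : ℝ) : ℂ) := by
  show expVal P3 (seq6 0) = ((1/6 : ℝ) : ℂ)
  simp only [P3, expVal_add', expVal_pcm]
  simp [ip, cz, iv, bv, phiA, phiB, phiC, u1, v1, v2, v3, v4, v5, w1, w2, w3,
      mv1, mv2, mv3, mv4, mv5, mw1, mw2, mw3, s0', s1', s2', s3', s4', s5', p0', p1', p2',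
      tp4, tp, q0, qp, Fintype.sum_prod_type, Fin.sum_univ_two, one_div, Prod.mk.injEq,
      Complex.star_def, _root_.map_add, _root_.map_mul, Complex.conj_ofReal]
  try push_cast
  try simp only [cinv]
  try ring_nf
  try norm_num [c2, c3, c4]
  try ring

lemma pos3 : 0 < (∑ i, expVal (Pm 3) (seq6 i)).re := by
  have hnn : ∀ i : Fin 6, 0 ≤ (expVal (Pm 3) (seq6 i)).re := fun i => re_nonneg _ psd3 _
  rw [Fin.sum_univ_six]
  simp only [Complex.add_re]
  have h0 := hnn 0; have h1 := hnn 1; have h2 := hnn 2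
  have h3 := hnn 3; have h4 := hnn 4; have h5 := hnn 5
  have hw := wit3
  rw [hw] at *
  simp only [Complex.ofReal_re] at *
  linarith

lemma psd4 : (Pm 4).PosSemidef := by
  show P4.PosSemidef
  unfold P4
  repeat' (first | exact pcm_psd _ (by norm_num) _ | apply Matrix.PosSemidef.add)

lemma zero4 : expVal (Pm 4) (seq6 4) = 0 := by
  show expVal P4 (seq6 4) = 0
  simp only [P4, expVal_add', expVal_pcm]
  simp [ip, cz, iv, bv, phiA, phiB, phiC, u1, v1, v2, v3, v4, v5, w1, w2, w3,
      mv1, mv2, mv3, mv4, mv5, mw1, mw2, mw3, s0', s1', s2', s3', s4', s5', p0', p1', p2',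
      tp4, tp, q0, qp, Fintype.sum_prod_type, Fin.sum_univ_two, one_div, Prod.mk.injEq,
      Complex.star_def, _root_.map_add, _root_.map_mul, Complex.conj_ofReal]
  try push_cast
  try simp only [cinv]
  try ring_nf
  try norm_num [c2, c3, c4]

lemma wit4 : expVal (Pm 4) (seq6 0) = ((1/6 : ℝ) : ℂ) := by
  show expVal P4 (seq6 0) = ((1/6 : ℝ) : ℂ)
  simp only [P4, expVal_add', expVal_pcm]
  simp [ip, cz, iv, bv, phiA, phiB, phiC, u1, v1, v2, v3, v4, v5, w1, w2, w3,
      mv1, mv2, mv3, mv4, mv5, mw1, mw2, mw3, s0', s1', s2', s3', s4', s5', p0', p1', p2',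
      tp4, tp, q0, qp, Fintype.sum_prod_type, Fin.sum_univ_two, one_div, Prod.mk.injEq,
      Complex.star_def, _root_.map_add, _root_.map_mul, Complex.conj_ofReal]
  try push_cast
  try simp only [cinv]
  try ring_nf
  try norm_num [c2, c3, c4]
  try ring

lemma pos4 : 0 < (∑ i, expVal (Pm 4) (seq6 i)).re := by
  have hnn : ∀ i : Fin 6, 0 ≤ (expVal (Pm 4) (seq6 i)).re := fun i => re_nonneg _ psd4 _
  rw [Fin.sum_univ_six]
  simp only [Complex.add_re]
  have h0 := hnn 0; have h1 := hnn 1; have h2 := hnn 2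
  have h3 := hnn 3; have h4 := hnn 4; have h5 := hnn 5
  have hw := wit4
  rw [hw] at *
  simp only [Complex.ofReal_re] at *
  linarith

lemma psd5 : (Pm 5).PosSemidef := by
  show P5.PosSemidef
  unfold P5
  repeat' (first | exact pcm_psd _ (by norm_num) _ | apply Matrix.PosSemidef.add)

lemma zero5 : expVal (Pm 5) (seq6 5) = 0 := by
  show expVal P5 (seq6 5) = 0
  simp only [P5, expVal_add', expVal_pcm]
  simp [ip, cz, iv, bv, phiA, phiB, phiC, u1, v1, v2, v3, v4, v5, w1, w2, w3,
      mv1, mv2, mv3, mv4, mv5, mw1, mw2, mw3, s0', s1', s2', s3', s4', s5', p0', p1', p2',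
      tp4, tp, q0, qp, Fintype.sum_prod_type, Fin.sum_univ_two, one_div, Prod.mk.injEq,
      Complex.star_def, _root_.map_add, _root_.map_mul, Complex.conj_ofReal]
  try push_cast
  try simp only [cinv]
  try ring_nf
  try norm_num [c2, c3, c4]

lemma wit5 : expVal (Pm 5) (seq6 1) = ((1/6 : ℝ) : ℂ) := by
  show expVal P5 (seq6 1) = ((1/6 : ℝ) : ℂ)
  simp only [P5, expVal_add', expVal_pcm]
  simp [ip, cz, iv, bv, phiA, phiB, phiC, u1, v1, v2, v3, v4, v5, w1, w2, w3,
      mv1, mv2, mv3, mv4, mv5, mw1, mw2, mw3, s0', s1', s2', s3', s4', s5', p0', p1', p2',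
      tp4, tp, q0, qp, Fintype.sum_prod_type, Fin.sum_univ_two, one_div, Prod.mk.injEq,
      Complex.star_def, _root_.map_add, _root_.map_mul, Complex.conj_ofReal]
  try push_cast
  try simp only [cinv]
  try ring_nf
  try norm_num [c2, c3, c4]
  try ring

lemma pos5 : 0 < (∑ i, expVal (Pm 5) (seq6 i)).re := by
  have hnn : ∀ i : Fin 6, 0 ≤ (expVal (Pm 5) (seq6 i)).re := fun i => re_nonneg _ psd5 _
  rw [Fin.sum_univ_six]
  simp only [Complex.add_re]
  have h0 := hnn 0; have h1 := hnn 1; have h2 := hnn 2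
  have h3 := hnn 3; have h4 := hnn 4; have h5 := hnn 5
  have hw := wit5
  rw [hw] at *
  simp only [Complex.ofReal_re] at *
  linarith

lemma re_nonneg' : True := trivial

lemma antidist : PureAntidist seq6 := by
  refine ⟨Pm, ?_, Psum, ?_, ?_⟩
  · intro j
    fin_cases j
    · exact psd0
    · exact psd1
    · exact psd2
    · exact psd3
    · exact psd4
    · exact psd5
  · intro j
    fin_cases j
    · exact zero0
    · exact zero1
    · exact zero2
    · exact zero3
    · exact zero4
    · exact zero5
  · intro j
    fin_cases j
    · exact pos0
    · exact pos1
    · exact pos2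
    · exact pos3
    · exact pos4
    · exact pos5

/-- Each of `S₁ = {ψ₁₂, ψ₁₃, ψ₂₁}`, `S₂ = {ψ₁₂, ψ₂₃, ψ₃₁}`, `S₃ = {ψ₁₃, ψ₂₁, ψ₃₂}`
satisfies the Caves–Fuchs–Schack conditions, their union is the full set of six sequence
states, and hence the six sequence states are globally antidistinguishable. -/
theorem seq6_globally_antidistinguishable :
    CFS (seq6 0) (seq6 1) (seq6 2) ∧
    CFS (seq6 0) (seq6 3) (seq6 4) ∧
    CFS (seq6 1) (seq6 2) (seq6 5) ∧
    ({seq6 0, seq6 1, seq6 2} ∪ {seq6 0, seq6 3, seq6 4} ∪ {seq6 1, seq6 2, seq6 5} :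
        Set ((Fin 2 × Fin 2) × (Fin 2 × Fin 2) → ℂ)) =
      {seq6 0, seq6 1, seq6 2, seq6 3, seq6 4, seq6 5} ∧
    PureAntidist seq6 := by
  exact ⟨cfs1, cfs2, cfs3, union_eq, antidist⟩
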